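/- Let n ≥ 3 and let u be a harmonic function on an open set G ⊆ ℝⁿ \ {0}. Then the Kelvin transform v(x) = |x|^{2-n} u(x/|x|²) is harmonic on the reflected domain G* = { x : x/|x|² ∈ G }. -/

import Mathlib

open Real
open scoped RealInnerProductSpace

/-- The `p`-Laplacian `div(|∇f|^(p-2) ∇f)` of `f`, computed classically as the trace of the
derivative of the vector field `y ↦ ‖∇f(y)‖^(p-2) • ∇f(y)`. -/
noncomputable def pLaplacian {n : ℕ} (p : ℝ) (f : EuclideanSpace ℝ (Fin n) → ℝ)
    (x : EuclideanSpace ℝ (Fin n)) : ℝ :=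
  LinearMap.trace ℝ (EuclideanSpace ℝ (Fin n))
    ((fderiv ℝ (fun y => ‖gradient f y‖ ^ (p - 2) • gradient f y) x).toLinearMap)

section kelvinAux

variable {E : Type*} [NormedAddCommGroup E] [InnerProductSpace ℝ E]

lemma hasFDerivAt_normSq' (x : E) :
    HasFDerivAt (fun y : E => ‖y‖ ^ 2) ((2:ℝ) • (innerSL ℝ x : E →L[ℝ] ℝ)) x := by
  have h := (hasFDerivAt_id x).inner ℝ (hasFDerivAt_id x)
  have h2 : (fun y : E => ⟪y, y⟫) = fun y : E => ‖y‖ ^ 2 := by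
    funext y; exact real_inner_self_eq_norm_sq y
  simp only [id] at h
  rw [h2] at h
  refine h.congr_fderiv ?_
  ext z
  simp [fderivInnerCLM_apply, real_inner_comm, two_smul]

lemma hasFDerivAt_norm_rpow' (a : ℝ) {x : E} (hx : x ≠ 0) :
    HasFDerivAt (fun y : E => ‖y‖ ^ a)
      ((a * ‖x‖ ^ a * ((‖x‖ ^ 2)⁻¹)) • (innerSL ℝ x : E →L[ℝ] ℝ)) x := by
  have hnx : (0:ℝ) < ‖x‖ := norm_pos_iff.2 hx
  have hq : (0:ℝ) < ‖x‖ ^ 2 := by positivity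
  have h1 : HasDerivAt (fun t : ℝ => t ^ (a/2)) ((a/2) * (‖x‖^2) ^ (a/2 - 1)) (‖x‖^2) :=
    hasDerivAt_rpow_const (Or.inl hq.ne')
  have h2 := h1.comp_hasFDerivAt x (hasFDerivAt_normSq' x)
  have hfun : ((fun t : ℝ => t ^ (a/2)) ∘ fun y : E => ‖y‖ ^ 2) = fun y : E => ‖y‖ ^ a := by
    funext y
    have : (‖y‖ ^ 2 : ℝ) = (‖y‖ : ℝ) ^ ((2:ℕ) : ℝ) := by
      rw [Real.rpow_natCast]
    simp only [Function.comp_apply, this, ← Real.rpow_mul (norm_nonneg y)]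
    norm_num
    rw [show (2:ℝ)*(a/2) = a by ring]
  rw [hfun] at h2
  refine h2.congr_fderiv ?_
  rw [smul_smul]
  congr 1
  have e1 : (‖x‖ ^ 2 : ℝ) ^ (a/2 - 1) = ‖x‖ ^ a * (‖x‖ ^ 2)⁻¹ := by
    rw [Real.rpow_sub hq, Real.rpow_one]
    congr 1
    rw [show (‖x‖ ^ 2 : ℝ) = (‖x‖ : ℝ) ^ ((2:ℕ) : ℝ) by rw [Real.rpow_natCast],
      ← Real.rpow_mul (norm_nonneg x)]
    norm_num
    rw [show (2:ℝ)*(a/2) = a by ring]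
  rw [e1]; ring

lemma hasFDerivAt_normSqInv {x : E} (hx : x ≠ 0) :
    HasFDerivAt (fun y : E => (‖y‖ ^ 2)⁻¹)
      ((-2 * ((‖x‖ ^ 2)⁻¹) ^ 2) • (innerSL ℝ x : E →L[ℝ] ℝ)) x := by
  have hq : (0:ℝ) < ‖x‖ ^ 2 := by
    have := norm_pos_iff.2 hx
    positivity
  have h := (hasDerivAt_inv hq.ne').comp_hasFDerivAt x (hasFDerivAt_normSq' x)
  refine h.congr_fderiv ?_
  rw [smul_smul]
  congr 1
  field_simp

noncomputable def invDeriv (x : E) : E →L[ℝ] E :=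
  (‖x‖ ^ 2)⁻¹ • ContinuousLinearMap.id ℝ E
    + ((-2 * ((‖x‖ ^ 2)⁻¹) ^ 2) • (innerSL ℝ x : E →L[ℝ] ℝ)).smulRight x

lemma hasFDerivAt_inversion {x : E} (hx : x ≠ 0) :
    HasFDerivAt (fun y : E => (‖y‖ ^ 2)⁻¹ • y) (invDeriv x) x := by
  have h := (hasFDerivAt_normSqInv hx).smul (hasFDerivAt_id x)
  exact h

lemma kelvin_hasGradientAt [CompleteSpace E] (a : ℝ) {u : E → ℝ} {y : E} (hy : y ≠ 0) {w : E}
    (hdu : HasFDerivAt u ((innerSL ℝ w : E →L[ℝ] ℝ)) ((‖y‖ ^ 2)⁻¹ • y)) :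
    HasGradientAt (fun z => ‖z‖ ^ a * u ((‖z‖ ^ 2)⁻¹ • z))
      ((a * ‖y‖ ^ a * (‖y‖ ^ 2)⁻¹ * u ((‖y‖ ^ 2)⁻¹ • y)) • y
        + (‖y‖ ^ a * (‖y‖ ^ 2)⁻¹) • w
        + (-2 * ‖y‖ ^ a * ((‖y‖ ^ 2)⁻¹) ^ 2 * ⟪y, w⟫) • y) y := by
  rw [hasGradientAt_iff_hasFDerivAt]
  have hφ := hasFDerivAt_inversion hy
  have hc : HasFDerivAt (fun z => u ((‖z‖ ^ 2)⁻¹ • z))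
      ((innerSL ℝ w : E →L[ℝ] ℝ).comp (invDeriv y)) y := by
    exact HasFDerivAt.comp (g := u) (f := fun z : E => (‖z‖ ^ 2)⁻¹ • z) y hdu hφ
  have hg := hasFDerivAt_norm_rpow' a hy
  have h := hg.mul hc
  refine h.congr_fderiv ?_
  ext z
  simp [InnerProductSpace.toDual_apply_apply, inner_add_left, real_inner_smul_left, invDeriv,
    inner_add_right, real_inner_smul_right, real_inner_comm y w]
  ring

end kelvinAux

section trAux
variable {E : Type*} [NormedAddCommGroup E] [InnerProductSpace ℝ E] [FiniteDimensional ℝ E]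

noncomputable def trE (A : E →L[ℝ] E) : ℝ := LinearMap.trace ℝ E (A : E →ₗ[ℝ] E)

lemma trE_add (A B : E →L[ℝ] E) : trE (A + B) = trE A + trE B := by simp [trE]

lemma trE_smul (c : ℝ) (A : E →L[ℝ] E) : trE (c • A) = c * trE A := by simp [trE]

lemma trE_id : trE (ContinuousLinearMap.id ℝ E) = Module.finrank ℝ E := by
  have : ((ContinuousLinearMap.id ℝ E : E →L[ℝ] E) : E →ₗ[ℝ] E) = LinearMap.id := rfl
  rw [trE, this, LinearMap.trace_id]

lemma trE_smulRight (ℓ : E →L[ℝ] ℝ) (v : E) : trE (ℓ.smulRight v) = ℓ v := by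
  have h : ((ℓ.smulRight v : E →L[ℝ] E) : E →ₗ[ℝ] E)
      = (LinearMap.toSpanSingleton ℝ E v) ∘ₗ (ℓ : E →ₗ[ℝ] ℝ) := by
    ext h; simp [LinearMap.toSpanSingleton_apply]
  rw [trE, h, LinearMap.trace_comp_comm']
  have h2 : ((ℓ : E →ₗ[ℝ] ℝ) ∘ₗ LinearMap.toSpanSingleton ℝ E v) = (ℓ v) • LinearMap.id := by
    ext : 1; simp [LinearMap.toSpanSingleton_apply, mul_comm]
  rw [h2, map_smul, LinearMap.trace_id]
  simp

lemma comp_smulRight' (A : E →L[ℝ] E) (ℓ : E →L[ℝ] ℝ) (v : E) :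
    A.comp (ℓ.smulRight v) = ℓ.smulRight (A v) := by
  ext z; simp

lemma smul_smulRight' (c : ℝ) (ℓ : E →L[ℝ] ℝ) (v : E) :
    (c • ℓ).smulRight v = c • (ℓ.smulRight v) := by
  ext z; simp [smul_smul, mul_comm]

lemma add_smulRight' (ℓ₁ ℓ₂ : E →L[ℝ] ℝ) (v : E) :
    (ℓ₁ + ℓ₂).smulRight v = ℓ₁.smulRight v + ℓ₂.smulRight v := by
  ext z; simp [add_smul]

lemma comp_smul' (A B : E →L[ℝ] E) (c : ℝ) :
    A.comp (c • B) = c • (A.comp B) := by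
  ext z; simp

lemma comp_add' (A B C : E →L[ℝ] E) :
    A.comp (B + C) = A.comp B + A.comp C := by
  ext z; simp

end trAux

lemma pLaplacian_two {n : ℕ} (f : EuclideanSpace ℝ (Fin n) → ℝ) (x : EuclideanSpace ℝ (Fin n)) :
    pLaplacian 2 f x = trE (fderiv ℝ (gradient f) x) := by
  have h : (fun y => ‖gradient f y‖ ^ ((2:ℝ) - 2) • gradient f y) = gradient f := by
    funext y; rw [sub_self, Real.rpow_zero, one_smul]
  unfold pLaplacian trE
  rw [h]

set_option maxHeartbeats 2000000 in
theorem stmt_5 (n : ℕ) (hn : 3 ≤ n) (G : Set (EuclideanSpace ℝ (Fin n)))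
    (hG : IsOpen G) (hG0 : (0 : EuclideanSpace ℝ (Fin n)) ∉ G)
    (u : EuclideanSpace ℝ (Fin n) → ℝ)
    (hu : ContDiffOn ℝ 2 u G)
    (huh : ∀ x ∈ G, pLaplacian 2 u x = 0)
    (v : EuclideanSpace ℝ (Fin n) → ℝ)
    (hv : v = fun y => ‖y‖ ^ ((2 : ℝ) - n) * u ((‖y‖ ^ 2)⁻¹ • y))
    (x : EuclideanSpace ℝ (Fin n)) (hx : x ≠ 0) (hxG : (‖x‖ ^ 2)⁻¹ • x ∈ G) :
    pLaplacian 2 v x = 0 := by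
  classical
  set a : ℝ := (2 : ℝ) - n with ha
  -- the inverted point
  set c : (EuclideanSpace ℝ (Fin n)) := (‖x‖ ^ 2)⁻¹ • x with hcdef
  -- basic facts about u near c
  have hcG : c ∈ G := hxG
  have hucd : ContDiffAt ℝ 2 u c := hu.contDiffAt (hG.mem_nhds hcG)
  -- gradient field of u near points of G
  have hdu_at : ∀ z ∈ G, HasFDerivAt u ((innerSL ℝ (gradient u z) : (EuclideanSpace ℝ (Fin n)) →L[ℝ] ℝ)) z := by
    intro z hz
    have hz2 : DifferentiableAt ℝ u z :=
      ((hu.contDiffAt (hG.mem_nhds hz)).differentiableAt (by norm_num))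
    have h := hasGradientAt_iff_hasFDerivAt.1 hz2.hasGradientAt
    have he : (InnerProductSpace.toDual ℝ (EuclideanSpace ℝ (Fin n))) (gradient u z)
        = (innerSL ℝ (gradient u z) : (EuclideanSpace ℝ (Fin n)) →L[ℝ] ℝ) := by
      ext t; simp [InnerProductSpace.toDual_apply_apply]
    rwa [he] at h
  -- the Hessian-type derivative of the gradient at c
  set H : (EuclideanSpace ℝ (Fin n)) →L[ℝ] (EuclideanSpace ℝ (Fin n)) := fderiv ℝ (gradient u) c with hHdef
  have hgrad_diff : DifferentiableAt ℝ (gradient u) c := by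
    have hdf : ContDiffAt ℝ 1 (fderiv ℝ u) c := hucd.fderiv_right (by norm_num)
    have h2 : DifferentiableAt ℝ (fderiv ℝ u) c := hdf.differentiableAt (by norm_num)
    have h3 : DifferentiableAt ℝ
        (fun z => (InnerProductSpace.toDual ℝ (EuclideanSpace ℝ (Fin n))).symm (fderiv ℝ u z)) c :=
      ((InnerProductSpace.toDual ℝ (EuclideanSpace ℝ (Fin n))).symm.toContinuousLinearEquiv.differentiableAt).comp c h2
    exact h3
  have hH : HasFDerivAt (gradient u) H c := hgrad_diff.hasFDerivAt
  have hH0 : trE H = 0 := by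
    rw [hHdef, ← pLaplacian_two]
    exact huh c hcG
  -- the open set of good points
  set U : Set (EuclideanSpace ℝ (Fin n)) := {0}ᶜ ∩ (fun y : (EuclideanSpace ℝ (Fin n)) => (‖y‖ ^ 2)⁻¹ • y) ⁻¹' G with hUdef
  have hUopen : IsOpen U := by
    apply ContinuousOn.isOpen_inter_preimage _ isOpen_compl_singleton hG
    intro y hy
    have hy0 : y ≠ 0 := hy
    have : ContinuousAt (fun y : (EuclideanSpace ℝ (Fin n)) => (‖y‖ ^ 2)⁻¹ • y) y := by
      have h1 : ContinuousAt (fun y : (EuclideanSpace ℝ (Fin n)) => (‖y‖ ^ 2)⁻¹) y := by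
        have : (‖y‖ ^ 2 : ℝ) ≠ 0 := by
          have := norm_pos_iff.2 hy0; positivity
        exact ((continuous_norm.pow 2).continuousAt).inv₀ this
      exact h1.smul continuousAt_id
    exact this.continuousWithinAt
  have hxU : x ∈ U := ⟨hx, hxG⟩
  -- the explicit gradient field
  set W : (EuclideanSpace ℝ (Fin n)) → (EuclideanSpace ℝ (Fin n)) := fun y => gradient u ((‖y‖ ^ 2)⁻¹ • y) with hWdef
  set F : (EuclideanSpace ℝ (Fin n)) → (EuclideanSpace ℝ (Fin n)) := fun y =>
      (a * ‖y‖ ^ a * (‖y‖ ^ 2)⁻¹ * u ((‖y‖ ^ 2)⁻¹ • y)) • y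
        + (‖y‖ ^ a * (‖y‖ ^ 2)⁻¹) • W y
        + (-2 * ‖y‖ ^ a * ((‖y‖ ^ 2)⁻¹) ^ 2 * ⟪y, W y⟫) • y with hFdef
  have hvF : ∀ y ∈ U, gradient v y = F y := by
    intro y hy
    have hy0 : y ≠ 0 := hy.1
    have hyG : (‖y‖ ^ 2)⁻¹ • y ∈ G := hy.2
    have h := kelvin_hasGradientAt a hy0 (hdu_at _ hyG)
    rw [hv]
    exact h.gradient
  have hev : gradient v =ᶠ[nhds x] F :=
    Filter.eventually_of_mem (hUopen.mem_nhds hxU) hvF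
  -- derivative pieces at x
  have hx0 : (0:ℝ) < ‖x‖ := norm_pos_iff.2 hx
  have hg := hasFDerivAt_norm_rpow' a hx
  have hqi := hasFDerivAt_normSqInv hx
  have hφ := hasFDerivAt_inversion hx
  have hW : HasFDerivAt W (H.comp (invDeriv x)) x := by
    exact HasFDerivAt.comp (g := gradient u) (f := fun z : (EuclideanSpace ℝ (Fin n)) => (‖z‖ ^ 2)⁻¹ • z) x hH hφ
  have huφ : HasFDerivAt (fun y : (EuclideanSpace ℝ (Fin n)) => u ((‖y‖ ^ 2)⁻¹ • y))
      ((innerSL ℝ (gradient u c) : (EuclideanSpace ℝ (Fin n)) →L[ℝ] ℝ).comp (invDeriv x)) x := by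
    exact HasFDerivAt.comp (g := u) (f := fun z : (EuclideanSpace ℝ (Fin n)) => (‖z‖ ^ 2)⁻¹ • z) x (hdu_at _ hcG) hφ
  have hsq : HasFDerivAt (fun y : (EuclideanSpace ℝ (Fin n)) => ((‖y‖ ^ 2)⁻¹) ^ 2)
      ((‖x‖ ^ 2)⁻¹ • ((-2 * ((‖x‖ ^ 2)⁻¹) ^ 2) • (innerSL ℝ x : (EuclideanSpace ℝ (Fin n)) →L[ℝ] ℝ))
        + (‖x‖ ^ 2)⁻¹ • ((-2 * ((‖x‖ ^ 2)⁻¹) ^ 2) • (innerSL ℝ x : (EuclideanSpace ℝ (Fin n)) →L[ℝ] ℝ))) x := by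
    have h := hqi.mul hqi
    exact h.congr_of_eventuallyEq (Filter.Eventually.of_forall fun y => by simp [pow_two])
  have hip : HasFDerivAt (fun y : (EuclideanSpace ℝ (Fin n)) => ⟪y, W y⟫)
      ((fderivInnerCLM ℝ (x, W x)).comp
        ((ContinuousLinearMap.id ℝ (EuclideanSpace ℝ (Fin n))).prod (H.comp (invDeriv x)))) x := by
    have h := (hasFDerivAt_id x).inner ℝ hW
    simpa [id] using h
  have h1 := ((hg.const_mul a).mul hqi).mul huφ
  have hF1 := h1.smul (hasFDerivAt_id x)
  have h2 := hg.mul hqi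
  have hF2 := h2.smul hW
  have h3 := ((hg.const_mul (-2 : ℝ)).mul hsq).mul hip
  have hF3 := h3.smul (hasFDerivAt_id x)
  have hMF := (hF1.add hF2).add hF3
  have e : fderiv ℝ F x = _ := hMF.fderiv
  rw [pLaplacian_two, hev.fderiv_eq, e]
  simp only [invDeriv, ContinuousLinearMap.comp_id, comp_add', comp_smul', comp_smulRight',
    smul_smulRight', add_smulRight', trE_add, trE_smul, trE_smulRight, trE_id]
  simp only [ContinuousLinearMap.comp_apply, ContinuousLinearMap.add_apply, Pi.mul_apply,
    ContinuousLinearMap.smul_apply, ContinuousLinearMap.smulRight_apply,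
    ContinuousLinearMap.id_apply, ContinuousLinearMap.prod_apply, fderivInnerCLM_apply,
    innerSL_apply_apply, id_eq, map_add, ContinuousLinearMap.map_smul,
    inner_add_right, inner_add_left, real_inner_smul_right, real_inner_smul_left,
    smul_eq_mul, real_inner_self_eq_norm_sq, finrank_euclideanSpace_fin, hH0]
  simp only [hWdef, ← hcdef, real_inner_comm (gradient u c) x]
  have hne : (‖x‖:ℝ) ≠ 0 := ne_of_gt hx0
  simp only [ha]
  field_simp
  ring
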